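/- Fix s ≤ 1 with s ≠ 0, data x_1, …, x_n ∈ ℝ^p, and a current centroid configuration Θ_m = (θ_{m,1}, …, θ_{m,k}) with d_φ(x_i, θ_{m,j}) > 0 for all i, j. Define weights w_{m,ij} = (1/k) d_φ(x_i, θ_{m,j})^{s−1} / ((1/k) Σ_{l=1}^k d_φ(x_i, θ_{m,l})^s)^{1 − 1/s}. Then for every Θ = (θ_1, …, θ_k) with d_φ(x_i, θ_j) > 0 for all i, j, the majorization inequality holds: f_s(Θ) ≤ f_s(Θ_m) − Σ_{i=1}^n Σ_{j=1}^k w_{m,ij} d_φ(x_i, θ_{m,j}) + Σ_{i=1}^n Σ_{j=1}^k w_{m,ij} d_φ(x_i, θ_j), with equality when Θ = Θ_m. -/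

import Mathlib

open MeasureTheory RealInnerProductSpace BigOperators

noncomputable section

/-- The Bregman divergence generated by a differentiable convex function `φ`. -/
def breg {p : ℕ} (φ : EuclideanSpace ℝ (Fin p) → ℝ)
    (x y : EuclideanSpace ℝ (Fin p)) : ℝ :=
  φ x - φ y - ⟪gradient φ y, x - y⟫

/-- The power mean `M_s(y) = ((1/k) Σ_j y_j^s)^(1/s)` (real exponents). -/
def powMean (s : ℝ) {k : ℕ} (y : Fin k → ℝ) : ℝ :=
  ((k : ℝ)⁻¹ * ∑ j, y j ^ s) ^ (1 / s)

/-- The Bregman power `k`-means objective. -/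
def objf {p : ℕ} (φ : EuclideanSpace ℝ (Fin p) → ℝ) (s : ℝ) {n k : ℕ}
    (x : Fin n → EuclideanSpace ℝ (Fin p))
    (Θ : Fin k → EuclideanSpace ℝ (Fin p)) : ℝ :=
  ∑ i, powMean s (fun j => breg φ (x i) (Θ j))

/-- The MM weights
`w_{m,ij} = (1/k) d_φ(x_i, θ_{m,j})^{s−1} / ((1/k) Σ_l d_φ(x_i, θ_{m,l})^s)^{1−1/s}`. -/
def bregWeight {p : ℕ} (φ : EuclideanSpace ℝ (Fin p) → ℝ) (s : ℝ) {n k : ℕ}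
    (x : Fin n → EuclideanSpace ℝ (Fin p))
    (Θm : Fin k → EuclideanSpace ℝ (Fin p)) (i : Fin n) (j : Fin k) : ℝ :=
  ((k : ℝ)⁻¹ * breg φ (x i) (Θm j) ^ (s - 1)) /
    (((k : ℝ)⁻¹ * ∑ l, breg φ (x i) (Θm l) ^ s) ^ (1 - 1 / s))

section Aux
open Finset

/-- Reverse Hölder inequality for `0 < p < 1`. -/
lemma rev_holder {k : ℕ} {p : ℝ} (hp0 : 0 < p) (hp1 : p < 1) (a b : Fin k → ℝ)
    (ha : ∀ j, 0 < a j) (hb : ∀ j, 0 < b j) :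
    (∑ j, a j ^ p) ^ (1/p) * (∑ j, b j ^ (p/(p-1))) ^ ((p-1)/p) ≤ ∑ j, a j * b j := by
  rcases Nat.eq_zero_or_pos k with hk | hk
  · subst hk
    simp only [univ_eq_empty, sum_empty]
    rw [one_div, Real.zero_rpow (by positivity : p⁻¹ ≠ 0), zero_mul]
  · haveI : Nonempty (Fin k) := Fin.pos_iff_nonempty.mp hk
    have hA : 0 < ∑ j, a j ^ p :=
      Finset.sum_pos (fun j _ => Real.rpow_pos_of_pos (ha j) _) univ_nonempty
    have hB : 0 < ∑ j, b j ^ (p/(p-1)) :=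
      Finset.sum_pos (fun j _ => Real.rpow_pos_of_pos (hb j) _) univ_nonempty
    have hAB : 0 < ∑ j, a j * b j :=
      Finset.sum_pos (fun j _ => mul_pos (ha j) (hb j)) univ_nonempty
    have hpq : (1/p).HolderConjugate (1/(1-p)) := by
      rw [Real.holderConjugate_iff]
      constructor
      · rw [lt_div_iff₀ hp0]; linarith
      · rw [one_div, one_div, inv_inv, inv_inv]; ring
    have H := Real.inner_le_Lp_mul_Lq_of_nonneg (univ : Finset (Fin k))
      (f := fun j => (a j * b j) ^ p) (g := fun j => (b j) ^ (-p)) hpq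
      (fun j _ => Real.rpow_nonneg (mul_pos (ha j) (hb j)).le _)
      (fun j _ => Real.rpow_nonneg (hb j).le _)
    have e1 : ∀ j : Fin k, (a j * b j) ^ p * (b j) ^ (-p) = a j ^ p := by
      intro j
      rw [Real.mul_rpow (ha j).le (hb j).le, mul_assoc, ← Real.rpow_add (hb j),
        add_neg_cancel, Real.rpow_zero, mul_one]
    have e2 : ∀ j : Fin k, ((a j * b j) ^ p) ^ (1/p) = a j * b j := by
      intro j
      rw [← Real.rpow_mul (mul_pos (ha j) (hb j)).le, mul_one_div,
        div_self hp0.ne', Real.rpow_one]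
    have e3 : ∀ j : Fin k, ((b j) ^ (-p)) ^ (1/(1-p)) = b j ^ (p/(p-1)) := by
      intro j
      rw [← Real.rpow_mul (hb j).le]
      congr 1
      have h1 : (1:ℝ) - p ≠ 0 := by linarith
      have h2 : p - 1 ≠ 0 := by linarith
      field_simp
      ring
    simp only [e1, e2, e3, one_div_one_div] at H
    have h2 : (∑ j, a j ^ p) ^ (1/p) ≤
        ((∑ j, a j * b j) ^ p * (∑ j, b j ^ (p/(p-1))) ^ (1-p)) ^ (1/p) :=
      Real.rpow_le_rpow hA.le H (by positivity)
    rw [Real.mul_rpow (by positivity) (by positivity),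
      ← Real.rpow_mul hAB.le, ← Real.rpow_mul hB.le, mul_one_div, div_self hp0.ne',
      Real.rpow_one] at h2
    calc (∑ j, a j ^ p) ^ (1/p) * (∑ j, b j ^ (p/(p-1))) ^ ((p-1)/p)
        ≤ ((∑ j, a j * b j) * (∑ j, b j ^ (p/(p-1))) ^ ((1-p) * (1/p))) *
            (∑ j, b j ^ (p/(p-1))) ^ ((p-1)/p) :=
          mul_le_mul_of_nonneg_right h2 (Real.rpow_nonneg hB.le _)
      _ = (∑ j, a j * b j) := by
          rw [mul_assoc, ← Real.rpow_add hB]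
          have : (1-p) * (1/p) + (p-1)/p = 0 := by field_simp; ring
          rw [this, Real.rpow_zero, mul_one]

/-- Key Hölder-type inequality: for `s ≤ 1`, `s ≠ 0`,
`(∑ y^s)^(1/s) (∑ u^s)^((s-1)/s) ≤ ∑ u^(s-1) y`. -/
lemma key_ineq {k : ℕ} {s : ℝ} (hs : s ≤ 1) (hs0 : s ≠ 0) (u y : Fin k → ℝ)
    (hu : ∀ j, 0 < u j) (hy : ∀ j, 0 < y j) :
    (∑ j, y j ^ s) ^ (1/s) * (∑ j, u j ^ s) ^ ((s-1)/s) ≤ ∑ j, u j ^ (s-1) * y j := by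
  rcases lt_trichotomy s 0 with hneg | h0 | hposz
  · -- s < 0 : apply rev_holder with p = s/(s-1), a j = u j ^ (s-1), b = y
    have h1 : s - 1 < 0 := by linarith
    have hne : s - 1 ≠ 0 := h1.ne
    have emul : (s-1) * (s/(s-1)) = s := by
      rw [mul_comm, div_mul_cancel₀ _ hne]
    have hp0 : 0 < s/(s-1) := div_pos_of_neg_of_neg hneg h1
    have hp1 : s/(s-1) < 1 := by
      rw [div_lt_iff_of_neg h1]; linarith
    have H := rev_holder hp0 hp1 (fun j => u j ^ (s-1)) y
      (fun j => Real.rpow_pos_of_pos (hu j) _) hy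
    have ea : ∀ j : Fin k, (u j ^ (s-1)) ^ (s/(s-1)) = u j ^ s := by
      intro j
      rw [← Real.rpow_mul (hu j).le, emul]
    have eq1 : s/(s-1) / (s/(s-1) - 1) = s := by
      rw [div_sub_one hne, show s - (s-1) = 1 by ring, div_div_eq_mul_div,
        div_one, div_mul_cancel₀ _ hne]
    have eq2 : (s/(s-1) - 1) / (s/(s-1)) = 1/s := by
      rw [div_sub_one hne, show s - (s-1) = 1 by ring, div_div, emul]
    have eq3 : (1:ℝ)/(s/(s-1)) = (s-1)/s := one_div_div _ _
    simp only [ea, eq1, eq2, eq3] at H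
    calc (∑ j, y j ^ s) ^ (1/s) * (∑ j, u j ^ s) ^ ((s-1)/s)
        = (∑ j, u j ^ s) ^ ((s-1)/s) * (∑ j, y j ^ s) ^ (1/s) := mul_comm _ _
      _ ≤ ∑ j, u j ^ (s-1) * y j := H
  · exact absurd h0 hs0
  · rcases eq_or_lt_of_le hs with rfl | hs1
    · simp
    · have hne : s - 1 ≠ 0 := by linarith
      have emul : (s-1) * (s/(s-1)) = s := by
        rw [mul_comm, div_mul_cancel₀ _ hne]
      have H := rev_holder hposz hs1 y (fun j => u j ^ (s-1)) hy
        (fun j => Real.rpow_pos_of_pos (hu j) _)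
      have ea : ∀ j : Fin k, (u j ^ (s-1)) ^ (s/(s-1)) = u j ^ s := by
        intro j
        rw [← Real.rpow_mul (hu j).le, emul]
      simp only [ea] at H
      simpa [mul_comm] using H

/-- Tangent (supporting hyperplane) inequality for the power mean. -/
lemma powMean_le_weighted {k : ℕ} {s : ℝ} (hs : s ≤ 1) (hs0 : s ≠ 0)
    (u y : Fin k → ℝ) (hu : ∀ j, 0 < u j) (hy : ∀ j, 0 < y j) :
    powMean s y ≤
      ∑ j, ((k:ℝ)⁻¹ * u j ^ (s-1) / (((k:ℝ)⁻¹ * ∑ l, u l ^ s) ^ (1 - 1/s))) * y j := by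
  rcases Nat.eq_zero_or_pos k with hk | hk
  · subst hk
    simp [powMean, Real.zero_rpow (inv_ne_zero hs0), Real.zero_rpow (one_div_ne_zero hs0)]
  · haveI : Nonempty (Fin k) := Fin.pos_iff_nonempty.mp hk
    have hK : (0:ℝ) < (k:ℝ) := by exact_mod_cast hk
    have hTu : 0 < ∑ l, u l ^ s :=
      Finset.sum_pos (fun j _ => Real.rpow_pos_of_pos (hu j) _) univ_nonempty
    have hTy : 0 < ∑ l, y l ^ s :=
      Finset.sum_pos (fun j _ => Real.rpow_pos_of_pos (hy j) _) univ_nonempty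
    have hR := key_ineq hs hs0 u y hu hy
    have hterm : ∀ j : Fin k,
        ((k:ℝ)⁻¹ * u j ^ (s-1) / (((k:ℝ)⁻¹ * ∑ l, u l ^ s) ^ (1 - 1/s))) * y j
          = ((k:ℝ)⁻¹ / (((k:ℝ)⁻¹ * ∑ l, u l ^ s) ^ (1 - 1/s))) * (u j ^ (s-1) * y j) := by
      intro j; ring
    rw [Finset.sum_congr rfl (fun j _ => hterm j), ← Finset.mul_sum]
    have e1 : (s-1)/s = 1 - 1/s := by field_simp
    have hconst : powMean s y
        = ((k:ℝ)⁻¹ / (((k:ℝ)⁻¹ * ∑ l, u l ^ s) ^ (1 - 1/s))) *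
            ((∑ l, y l ^ s) ^ (1/s) * (∑ l, u l ^ s) ^ ((s-1)/s)) := by
      rw [powMean, e1, Real.mul_rpow (by positivity) hTy.le,
        Real.mul_rpow (by positivity) hTu.le, div_mul_eq_mul_div,
        eq_div_iff (by positivity :
          ((k:ℝ)⁻¹ ^ (1 - 1/s) * (∑ l, u l ^ s) ^ (1 - 1/s)) ≠ 0)]
      have eK : (k:ℝ)⁻¹ ^ (1/s) * (k:ℝ)⁻¹ ^ (1 - 1/s) = (k:ℝ)⁻¹ := by
        rw [← Real.rpow_add (by positivity), add_sub_cancel, Real.rpow_one]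
      linear_combination ((∑ l, y l ^ s) ^ (1/s) * (∑ l, u l ^ s) ^ (1 - 1/s)) * eK
    rw [hconst]
    exact mul_le_mul_of_nonneg_left hR (by positivity)

/-- The weighted sum at the anchor point recovers the power mean. -/
lemma powMean_eq_weighted {k : ℕ} {s : ℝ} (hs0 : s ≠ 0)
    (u : Fin k → ℝ) (hu : ∀ j, 0 < u j) :
    powMean s u =
      ∑ j, ((k:ℝ)⁻¹ * u j ^ (s-1) / (((k:ℝ)⁻¹ * ∑ l, u l ^ s) ^ (1 - 1/s))) * u j := by
  rcases Nat.eq_zero_or_pos k with hk | hk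
  · subst hk
    simp [powMean, Real.zero_rpow (inv_ne_zero hs0), Real.zero_rpow (one_div_ne_zero hs0)]
  · haveI : Nonempty (Fin k) := Fin.pos_iff_nonempty.mp hk
    have hK : (0:ℝ) < (k:ℝ) := by exact_mod_cast hk
    have hTu : 0 < ∑ l, u l ^ s :=
      Finset.sum_pos (fun j _ => Real.rpow_pos_of_pos (hu j) _) univ_nonempty
    have hS : (0:ℝ) < (k:ℝ)⁻¹ * ∑ l, u l ^ s := by positivity
    have hterm : ∀ j : Fin k,
        ((k:ℝ)⁻¹ * u j ^ (s-1) / (((k:ℝ)⁻¹ * ∑ l, u l ^ s) ^ (1 - 1/s))) * u j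
          = ((k:ℝ)⁻¹ / (((k:ℝ)⁻¹ * ∑ l, u l ^ s) ^ (1 - 1/s))) * (u j ^ (s-1) * u j) := by
      intro j; ring
    have e2 : ∀ j : Fin k, u j ^ (s-1) * u j = u j ^ s := by
      intro j
      rw [← Real.rpow_add_one (hu j).ne' (s-1), sub_add_cancel]
    simp only [hterm, e2]
    rw [← Finset.mul_sum, powMean]
    rw [div_mul_eq_mul_div, eq_div_iff (by positivity), ← Real.rpow_add hS,
      one_div, add_sub_cancel, Real.rpow_one]

end Aux

/-- majorization inequality for the MM surrogate: for
`s ≤ 1`, `s ≠ 0` and any `Θ` with positive divergences,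
`f_s(Θ) ≤ f_s(Θ_m) − Σ_{ij} w_{m,ij} d_φ(x_i, θ_{m,j}) + Σ_{ij} w_{m,ij} d_φ(x_i, θ_j)`,
with equality when `Θ = Θ_m`. -/
theorem mm_majorization {p : ℕ}
    (φ : EuclideanSpace ℝ (Fin p) → ℝ)
    (hdiff : Differentiable ℝ φ) (hconv : ConvexOn ℝ Set.univ φ)
    (s : ℝ) (hs : s ≤ 1) (hs0 : s ≠ 0)
    {n k : ℕ} (x : Fin n → EuclideanSpace ℝ (Fin p))
    (Θm : Fin k → EuclideanSpace ℝ (Fin p))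
    (hpos : ∀ i j, 0 < breg φ (x i) (Θm j))
    (Θ : Fin k → EuclideanSpace ℝ (Fin p))
    (hpos' : ∀ i j, 0 < breg φ (x i) (Θ j)) :
    objf φ s x Θ ≤ objf φ s x Θm
        - (∑ i, ∑ j, bregWeight φ s x Θm i j * breg φ (x i) (Θm j))
        + ∑ i, ∑ j, bregWeight φ s x Θm i j * breg φ (x i) (Θ j)
    ∧ objf φ s x Θm = objf φ s x Θm
        - (∑ i, ∑ j, bregWeight φ s x Θm i j * breg φ (x i) (Θm j))
        + ∑ i, ∑ j, bregWeight φ s x Θm i j * breg φ (x i) (Θm j) := by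
  constructor
  · have hi : ∀ i, powMean s (fun j => breg φ (x i) (Θ j))
        ≤ powMean s (fun j => breg φ (x i) (Θm j))
          - (∑ j, bregWeight φ s x Θm i j * breg φ (x i) (Θm j))
          + ∑ j, bregWeight φ s x Θm i j * breg φ (x i) (Θ j) := by
      intro i
      have heq := powMean_eq_weighted hs0 (fun j => breg φ (x i) (Θm j)) (hpos i)
      have hle := powMean_le_weighted hs hs0 (fun j => breg φ (x i) (Θm j))
        (fun j => breg φ (x i) (Θ j)) (hpos i) (hpos' i)
      simp only [bregWeight]
      rw [← heq] at *
      linarith [hle]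
    calc objf φ s x Θ ≤ ∑ i, (powMean s (fun j => breg φ (x i) (Θm j))
          - (∑ j, bregWeight φ s x Θm i j * breg φ (x i) (Θm j))
          + ∑ j, bregWeight φ s x Θm i j * breg φ (x i) (Θ j)) :=
        Finset.sum_le_sum (fun i _ => hi i)
      _ = _ := by
        rw [Finset.sum_add_distrib, Finset.sum_sub_distrib]
        rfl
  · ring
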